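/- The average subset entropies are concave in the subset size: for every integer k with 1 ≤ k ≤ n−1, r_{k+1}(X) + r_{k−1}(X) ≤ 2·r_k(X); equivalently u_k(X) ≥ 0 for all 1 ≤ k ≤ n−1. -/

import Mathlib

open MeasureTheory Finset

noncomputable section

variable {Ω : Type*} [MeasurableSpace Ω]

/-- Shannon entropy of a finite-valued random variable `Z` under the measure `μ`
(with the convention that the entropy of an empty tuple is `negMulLog (μ univ) = 0`
for a probability measure). -/
def ent {α : Type*} [Fintype α] (μ : Measure Ω) (Z : Ω → α) : ℝ :=
  ∑ z : α, Real.negMulLog ((μ (Z ⁻¹' {z})).toReal)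

/-- Conditional entropy `H(A | B)`. -/
def condEnt {α β : Type*} [Fintype α] [Fintype β] (μ : Measure Ω)
    (A : Ω → α) (B : Ω → β) : ℝ :=
  ent μ (fun ω => (A ω, B ω)) - ent μ B

/-- Mutual information `I(A ; B)`. -/
def mi {α β : Type*} [Fintype α] [Fintype β] (μ : Measure Ω)
    (A : Ω → α) (B : Ω → β) : ℝ :=
  ent μ A + ent μ B - ent μ (fun ω => (A ω, B ω))

/-- Conditional mutual information `I(A ; B | C)`. -/
def cmi {α β γ : Type*} [Fintype α] [Fintype β] [Fintype γ] (μ : Measure Ω)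
    (A : Ω → α) (B : Ω → β) (C : Ω → γ) : ℝ :=
  ent μ (fun ω => (A ω, C ω)) + ent μ (fun ω => (B ω, C ω))
    - ent μ (fun ω => (A ω, B ω, C ω)) - ent μ C

/-- The sub-tuple `X^a = (X_i)_{i ∈ a}` of the random vector `X = (X_1, …, X_n)`. -/
def restr {n : ℕ} {S : Type*} (X : Fin n → Ω → S) (a : Finset (Fin n)) :
    Ω → (a → S) :=
  fun ω i => X i.1 ω

/-- Average subset entropy `r_k(X) = C(n,k)⁻¹ ∑_{|a| = k} H(X^a)`. -/
def rE {n : ℕ} {S : Type*} [Fintype S] (μ : Measure Ω) (X : Fin n → Ω → S) (k : ℕ) : ℝ :=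
  ((n.choose k : ℝ))⁻¹ *
    ∑ a ∈ univ.powerset.filter (fun a : Finset (Fin n) => a.card = k), ent μ (restr X a)

/-- Average conditional pairwise mutual information
`u_k(X) = (C(n,k+1) C(k+1,2))⁻¹ ∑_{i<j} ∑_{|a| = k-1, i,j ∉ a} I(X_i ; X_j | X^a)`. -/
def uI {n : ℕ} {S : Type*} [Fintype S] (μ : Measure Ω) (X : Fin n → Ω → S) (k : ℕ) : ℝ :=
  ((n.choose (k + 1) : ℝ) * ((k + 1).choose 2 : ℝ))⁻¹ *
    ∑ p ∈ univ.filter (fun p : Fin n × Fin n => p.1 < p.2),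
      ∑ a ∈ (univ \ ({p.1, p.2} : Finset (Fin n))).powerset.filter
          (fun a : Finset (Fin n) => a.card = k - 1),
        cmi μ (X p.1) (X p.2) (restr X a)

section auxiliaryLemmas
open Real


lemma two_var {α β : Type*} [Fintype α] [Fintype β] (p : α → β → ℝ)
    (hp : ∀ a b, 0 ≤ p a b) :
    (∑ a, ∑ b, negMulLog (p a b)) + negMulLog (∑ a, ∑ b, p a b)
      ≤ (∑ a, negMulLog (∑ b, p a b)) + ∑ b, negMulLog (∑ a, p a b) := by
  classical
  set ra : α → ℝ := fun a => ∑ b, p a b with hra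
  set rb : β → ℝ := fun b => ∑ a, p a b with hrb
  set t : ℝ := ∑ a, ra a with ht
  have hra0 : ∀ a, 0 ≤ ra a := fun a => Finset.sum_nonneg fun b _ => hp a b
  have hrb0 : ∀ b, 0 ≤ rb b := fun b => Finset.sum_nonneg fun a _ => hp a b
  have ht0 : 0 ≤ t := Finset.sum_nonneg fun a _ => hra0 a
  have hp_ra : ∀ a b, p a b ≤ ra a := fun a b =>
    Finset.single_le_sum (fun b _ => hp a b) (mem_univ b)
  have hp_rb : ∀ a b, p a b ≤ rb b := fun a b =>
    Finset.single_le_sum (fun a _ => hp a b) (mem_univ a)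
  have hra_t : ∀ a, ra a ≤ t := fun a =>
    Finset.single_le_sum (fun a _ => hra0 a) (mem_univ a)
  have htb : ∑ b, rb b = t := Finset.sum_comm
  set q : α → β → ℝ := fun a b => ra a * rb b / t with hq
  have hq0 : ∀ a b, 0 ≤ q a b := fun a b =>
    div_nonneg (mul_nonneg (hra0 a) (hrb0 b)) ht0
  have hsumq : ∑ a, ∑ b, q a b = t := by
    rcases eq_or_ne t 0 with h0 | h0
    · have hraz : ∀ a, ra a = 0 := fun a => le_antisymm (h0 ▸ hra_t a) (hra0 a)
      simp [hq, hraz, h0]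
    · have h1 : ∑ a, ∑ b, q a b = (∑ a, ra a) * (∑ b, rb b) / t := by
        rw [Finset.sum_mul, Finset.sum_div]
        refine Finset.sum_congr rfl fun a _ => ?_
        rw [Finset.mul_sum, Finset.sum_div]
      rw [h1, htb, ← ht, mul_div_assoc, div_self h0, mul_one]
  have key : ∀ a b,
      p a b - q a b ≤
        p a b * Real.log (p a b) + p a b * Real.log t
          - p a b * Real.log (ra a) - p a b * Real.log (rb b) := by
    intro a b
    rcases (hp a b).eq_or_lt with h0 | h0
    · rw [← h0]; simp [hq0 a b]
    · have hrapos : 0 < ra a := lt_of_lt_of_le h0 (hp_ra a b)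
      have hrbpos : 0 < rb b := lt_of_lt_of_le h0 (hp_rb a b)
      have htpos : 0 < t := lt_of_lt_of_le hrapos (hra_t a)
      have hqpos : 0 < q a b := div_pos (mul_pos hrapos hrbpos) htpos
      have hlog : Real.log (q a b / p a b) ≤ q a b / p a b - 1 :=
        Real.log_le_sub_one_of_pos (div_pos hqpos h0)
      have h2 : p a b * Real.log (q a b / p a b) ≤ q a b - p a b := by
        calc p a b * Real.log (q a b / p a b)
            ≤ p a b * (q a b / p a b - 1) :=
              mul_le_mul_of_nonneg_left hlog (le_of_lt h0)
          _ = q a b - p a b := by field_simp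
      have hexp : Real.log (q a b / p a b)
          = Real.log (ra a) + Real.log (rb b) - Real.log t - Real.log (p a b) := by
        rw [Real.log_div (ne_of_gt hqpos) (ne_of_gt h0), hq]
        rw [Real.log_div (by positivity) (ne_of_gt htpos),
          Real.log_mul (ne_of_gt hrapos) (ne_of_gt hrbpos)]
      nlinarith [h2, hexp]
  have hsum : 0 ≤ ∑ a, ∑ b, (p a b * Real.log (p a b) + p a b * Real.log t
      - p a b * Real.log (ra a) - p a b * Real.log (rb b)) := by
    have h1 : ∑ a, ∑ b, (p a b - q a b) ≤ _ :=
      Finset.sum_le_sum fun a _ => Finset.sum_le_sum fun b _ => key a b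
    refine le_trans (le_of_eq ?_) h1
    have : ∑ a, ∑ b, (p a b - q a b) = (∑ a, ∑ b, p a b) - ∑ a, ∑ b, q a b := by
      simp [Finset.sum_sub_distrib]
    rw [this, hsumq]
    simp [ht, hra]
  suffices h : 0 ≤ (∑ a, negMulLog (ra a)) + (∑ b, negMulLog (rb b))
      - (∑ a, ∑ b, negMulLog (p a b)) - negMulLog t by linarith
  have e1 : ∑ a, negMulLog (ra a) = ∑ a, ∑ b, -(p a b * Real.log (ra a)) := by
    refine Finset.sum_congr rfl fun a _ => ?_
    rw [Real.negMulLog, hra]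
    simp only [neg_mul]
    rw [Finset.sum_mul, ← Finset.sum_neg_distrib]
  have e2 : ∑ b, negMulLog (rb b) = ∑ a, ∑ b, -(p a b * Real.log (rb b)) := by
    rw [Finset.sum_comm]
    refine Finset.sum_congr rfl fun b _ => ?_
    rw [Real.negMulLog, hrb]
    simp only [neg_mul]
    rw [Finset.sum_mul, ← Finset.sum_neg_distrib]
  have e3 : negMulLog t = ∑ a, ∑ b, -(p a b * Real.log t) := by
    rw [Real.negMulLog, ht]
    simp only [neg_mul, hra]
    rw [Finset.sum_mul, ← Finset.sum_neg_distrib]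
    refine Finset.sum_congr rfl fun a _ => ?_
    rw [Finset.sum_mul, ← Finset.sum_neg_distrib]
  rw [e1, e2, e3]
  refine le_trans hsum (le_of_eq ?_)
  simp only [← Finset.sum_add_distrib, ← Finset.sum_sub_distrib]
  refine Finset.sum_congr rfl fun a _ => Finset.sum_congr rfl fun b _ => ?_
  simp only [Real.negMulLog]
  ring

lemma three_var {α β γ : Type*} [Fintype α] [Fintype β] [Fintype γ]
    (p : α → β → γ → ℝ) (hp : ∀ a b c, 0 ≤ p a b c) :
    (∑ a, ∑ b, ∑ c, negMulLog (p a b c)) + (∑ c, negMulLog (∑ a, ∑ b, p a b c))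
      ≤ (∑ a, ∑ c, negMulLog (∑ b, p a b c))
        + ∑ b, ∑ c, negMulLog (∑ a, p a b c) := by
  have h1 : ∑ a, ∑ b, ∑ c, negMulLog (p a b c)
      = ∑ c, ∑ a, ∑ b, negMulLog (p a b c) :=
    calc ∑ a, ∑ b, ∑ c, negMulLog (p a b c)
        = ∑ a, ∑ c, ∑ b, negMulLog (p a b c) :=
          Finset.sum_congr rfl fun a _ => Finset.sum_comm
      _ = ∑ c, ∑ a, ∑ b, negMulLog (p a b c) := Finset.sum_comm
  have h2 : ∑ a, ∑ c, negMulLog (∑ b, p a b c)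
      = ∑ c, ∑ a, negMulLog (∑ b, p a b c) := Finset.sum_comm
  have h3 : ∑ b, ∑ c, negMulLog (∑ a, p a b c)
      = ∑ c, ∑ b, negMulLog (∑ a, p a b c) := Finset.sum_comm
  rw [h1, h2, h3, ← Finset.sum_add_distrib, ← Finset.sum_add_distrib]
  exact Finset.sum_le_sum fun c _ => two_var (fun a b => p a b c) (fun a b => hp a b c)

lemma ent_comp_inj {α β : Type*} [Fintype α] [Fintype β] (μ : Measure Ω)
    (Z : Ω → α) (f : α → β) (hf : Function.Injective f) :
    ent μ (fun ω => f (Z ω)) = ent μ Z := by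
  classical
  unfold ent
  rw [← Finset.sum_subset (Finset.subset_univ ((univ : Finset α).image f))
    (fun z _ hz => ?_)]
  · rw [Finset.sum_image (fun a _ b _ h => hf h)]
    refine Finset.sum_congr rfl fun a _ => ?_
    have hset : (fun ω => f (Z ω)) ⁻¹' {f a} = Z ⁻¹' {a} := by
      ext ω
      simp only [Set.mem_preimage, Set.mem_singleton_iff]
      exact ⟨fun h => hf h, fun h => by rw [h]⟩
    rw [hset]
  · have hset : (fun ω => f (Z ω)) ⁻¹' {z} = ∅ := by
      ext ω
      simp only [Set.mem_preimage, Set.mem_singleton_iff, Set.mem_empty_iff_false,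
        iff_false]
      intro h
      exact hz (Finset.mem_image.2 ⟨Z ω, Finset.mem_univ _, h⟩)
    rw [hset]
    simp

lemma toReal_measure_range_eq_sum {δ κ : Type*} [Fintype κ] [MeasurableSpace δ]
    [MeasurableSingletonClass δ] (μ : Measure Ω) [IsFiniteMeasure μ]
    (W : Ω → δ) (hW : Measurable W) (e : κ → δ) (he : Function.Injective e) :
    (μ (W ⁻¹' (Set.range e))).toReal = ∑ k : κ, (μ (W ⁻¹' {e k})).toReal := by
  classical
  have hset : W ⁻¹' (Set.range e) = ⋃ k ∈ (univ : Finset κ), W ⁻¹' {e k} := by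
    ext ω
    simp [Set.range, eq_comm]
  rw [hset, measure_biUnion_finset ?hd (fun k _ => hW (measurableSet_singleton _)),
    ENNReal.toReal_sum (fun k _ => measure_ne_top μ _)]
  case hd =>
    intro k _ k' _ hkk'
    refine Set.disjoint_left.2 fun ω h1 h2 => hkk' ?_
    simp only [Set.mem_preimage, Set.mem_singleton_iff] at h1 h2
    exact he (h1.symm.trans h2)

lemma cmi_nonneg {α β γ : Type*} [Fintype α] [Fintype β] [Fintype γ]
    [MeasurableSpace α] [MeasurableSpace β] [MeasurableSpace γ]
    [MeasurableSingletonClass α] [MeasurableSingletonClass β] [MeasurableSingletonClass γ]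
    (μ : Measure Ω) [IsFiniteMeasure μ]
    (A : Ω → α) (B : Ω → β) (C : Ω → γ)
    (hA : Measurable A) (hB : Measurable B) (hC : Measurable C) :
    0 ≤ cmi μ A B C := by
  classical
  set W : Ω → α × β × γ := fun ω => (A ω, B ω, C ω) with hWdef
  have hWm : Measurable W := hA.prodMk (hB.prodMk hC)
  set p : α → β → γ → ℝ := fun a b c => (μ (W ⁻¹' {(a, b, c)})).toReal with hp
  have hp0 : ∀ a b c, 0 ≤ p a b c := fun a b c => ENNReal.toReal_nonneg
  have eABC : ent μ W = ∑ a, ∑ b, ∑ c, negMulLog (p a b c) := by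
    unfold ent
    rw [Fintype.sum_prod_type]
    exact Finset.sum_congr rfl fun a _ => Fintype.sum_prod_type _
  have eAC : ent μ (fun ω => (A ω, C ω)) = ∑ a, ∑ c, negMulLog (∑ b, p a b c) := by
    unfold ent
    rw [Fintype.sum_prod_type]
    refine Finset.sum_congr rfl fun a _ => Finset.sum_congr rfl fun c _ => ?_
    congr 1
    have hset : (fun ω => (A ω, C ω)) ⁻¹' {(a, c)}
        = W ⁻¹' (Set.range fun b => (a, b, c)) := by
      ext ω
      simp only [Set.mem_preimage, Set.mem_singleton_iff, Set.mem_range, hWdef,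
        Prod.mk.injEq]
      constructor
      · rintro ⟨h1, h2⟩
        exact ⟨B ω, h1.symm, rfl, h2.symm⟩
      · rintro ⟨b, h1, -, h2⟩
        exact ⟨h1.symm, h2.symm⟩
    rw [hset, toReal_measure_range_eq_sum μ W hWm _ (fun b b' h => by
      simpa using h)]
  have eBC : ent μ (fun ω => (B ω, C ω)) = ∑ b, ∑ c, negMulLog (∑ a, p a b c) := by
    unfold ent
    rw [Fintype.sum_prod_type]
    refine Finset.sum_congr rfl fun b _ => Finset.sum_congr rfl fun c _ => ?_
    congr 1
    have hset : (fun ω => (B ω, C ω)) ⁻¹' {(b, c)}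
        = W ⁻¹' (Set.range fun a => (a, b, c)) := by
      ext ω
      simp only [Set.mem_preimage, Set.mem_singleton_iff, Set.mem_range, hWdef,
        Prod.mk.injEq]
      constructor
      · rintro ⟨h1, h2⟩
        exact ⟨A ω, rfl, h1.symm, h2.symm⟩
      · rintro ⟨a, -, h1, h2⟩
        exact ⟨h1.symm, h2.symm⟩
    rw [hset, toReal_measure_range_eq_sum μ W hWm _ (fun a a' h => by
      simpa using h)]
  have eC : ent μ C = ∑ c, negMulLog (∑ a, ∑ b, p a b c) := by
    unfold ent
    refine Finset.sum_congr rfl fun c _ => ?_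
    congr 1
    have hset : C ⁻¹' {c} = W ⁻¹' (Set.range fun x : α × β => (x.1, x.2, c)) := by
      ext ω
      simp only [Set.mem_preimage, Set.mem_singleton_iff, Set.mem_range, hWdef,
        Prod.mk.injEq]
      constructor
      · intro h
        exact ⟨(A ω, B ω), rfl, rfl, h.symm⟩
      · rintro ⟨x, -, -, h⟩
        exact h.symm
    rw [hset, toReal_measure_range_eq_sum μ W hWm _ (fun x x' h => by
      have := Prod.mk.injEq .. ▸ h
      simp only [Prod.mk.injEq] at h
      exact Prod.ext h.1 h.2.1)]
    rw [Fintype.sum_prod_type]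
  have h3v := three_var p hp0
  have : ent μ (fun ω => (A ω, B ω, C ω)) = ent μ W := rfl
  unfold cmi
  rw [this, eABC, eAC, eBC, eC]
  linarith

end auxiliaryLemmas

section combLemmas
lemma card_lt_pairs {n : ℕ} (b : Finset (Fin n)) :
    (univ.filter (fun p : Fin n × Fin n => p.1 < p.2 ∧ p.1 ∈ b ∧ p.2 ∈ b)).card
      = b.card.choose 2 := by
  classical
  set L := univ.filter (fun p : Fin n × Fin n => p.1 < p.2 ∧ p.1 ∈ b ∧ p.2 ∈ b) with hL
  set G := univ.filter (fun p : Fin n × Fin n => p.2 < p.1 ∧ p.1 ∈ b ∧ p.2 ∈ b) with hG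
  have hcardeq : L.card = G.card := by
    refine Finset.card_nbij' Prod.swap Prod.swap ?_ ?_ ?_ ?_
    · intro p hp
      simp only [hL, hG, mem_filter, mem_univ, true_and] at hp ⊢
      have hp' := (Finset.mem_filter.1 (show p ∈ L from hp)).2
      exact (Finset.mem_filter.2 ⟨Finset.mem_univ _, hp'.1, hp'.2.2, hp'.2.1⟩ : p.swap ∈ G)
    · intro p hp
      simp only [hL, hG, mem_filter, mem_univ, true_and] at hp ⊢
      have hp' := (Finset.mem_filter.1 (show p ∈ G from hp)).2
      exact (Finset.mem_filter.2 ⟨Finset.mem_univ _, hp'.1, hp'.2.2, hp'.2.1⟩ : p.swap ∈ L)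
    · intro p _; simp
    · intro p _; simp
  have hdisj : Disjoint L G := by
    rw [Finset.disjoint_left]
    intro p hp hq
    simp only [hL, hG, mem_filter, mem_univ, true_and] at hp hq
    exact absurd hq.1 (lt_asymm hp.1)
  have hunion : L ∪ G = b.offDiag := by
    ext p
    simp only [hL, hG, Finset.mem_union, mem_filter, mem_univ, true_and,
      Finset.mem_offDiag]
    constructor
    · rintro (⟨h1, h2, h3⟩ | ⟨h1, h2, h3⟩)
      · exact ⟨h2, h3, ne_of_lt h1⟩
      · exact ⟨h2, h3, (ne_of_lt h1).symm⟩
    · rintro ⟨h1, h2, h3⟩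
      rcases lt_or_gt_of_ne h3 with h | h
      · exact Or.inl ⟨h, h1, h2⟩
      · exact Or.inr ⟨h, h1, h2⟩
  have hsum : L.card + G.card = b.card * b.card - b.card := by
    rw [← Finset.card_union_of_disjoint hdisj, hunion, Finset.offDiag_card]
  have h2 : b.card.choose 2 * 2 = b.card * b.card - b.card := by
    have := Nat.choose_succ_right_eq b.card 1
    rw [Nat.choose_one_right] at this
    rw [this, Nat.mul_sub_one]
  omega

lemma filter_mem_not_mem {n : ℕ} (c : Finset (Fin n)) :
    (univ.filter (fun p : Fin n × Fin n => p.1 ∈ c ∧ p.2 ∉ c)).card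
      = c.card * (n - c.card) := by
  classical
  have : univ.filter (fun p : Fin n × Fin n => p.1 ∈ c ∧ p.2 ∉ c) = c ×ˢ cᶜ := by
    ext p
    simp [Finset.mem_product, Finset.mem_compl]
  rw [this, Finset.card_product, Finset.card_compl, Fintype.card_fin]

section comb
variable {n : ℕ} (H : Finset (Fin n) → ℝ) (l : ℕ)

-- basic membership facts
lemma mem_avoid {p : Fin n × Fin n} {a : Finset (Fin n)}
    (ha : a ∈ powersetCard l (univ \ {p.1, p.2})) :
    a.card = l ∧ p.1 ∉ a ∧ p.2 ∉ a := by
  rw [Finset.mem_powersetCard] at ha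
  obtain ⟨hsub, hcard⟩ := ha
  refine ⟨hcard, fun h => ?_, fun h => ?_⟩
  · have := hsub h
    simp at this
  · have := hsub h
    simp at this

lemma T3_eq :
    ∑ p ∈ univ.filter (fun p : Fin n × Fin n => p.1 < p.2),
      ∑ a ∈ powersetCard l (univ \ {p.1, p.2}), H (insert p.1 (insert p.2 a))
    = ((l + 2).choose 2 : ℝ) * ∑ b ∈ powersetCard (l + 2) univ, H b := by
  classical
  rw [Finset.sum_sigma']
  have key : ∑ x ∈ (univ.filter (fun p : Fin n × Fin n => p.1 < p.2)).sigma
        (fun p => powersetCard l (univ \ {p.1, p.2})),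
        H (insert x.1.1 (insert x.1.2 x.2))
      = ∑ y ∈ (powersetCard (l + 2) (univ : Finset (Fin n))).sigma
          (fun b => univ.filter (fun p : Fin n × Fin n => p.1 < p.2 ∧ p.1 ∈ b ∧ p.2 ∈ b)),
          H y.1 := by
    refine Finset.sum_nbij' (fun x => ⟨insert x.1.1 (insert x.1.2 x.2), x.1⟩)
      (fun y => ⟨y.2, (y.1.erase y.2.1).erase y.2.2⟩) ?_ ?_ ?_ ?_ ?_
    · rintro ⟨p, a⟩ hx
      rw [Finset.mem_sigma, Finset.mem_filter] at hx
      obtain ⟨⟨-, hlt⟩, ha⟩ := hx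
      obtain ⟨hcard, h1, h2⟩ := mem_avoid l ha
      have hne : p.1 ≠ p.2 := ne_of_lt hlt
      have h1' : p.1 ∉ insert p.2 a := by
        simp only [Finset.mem_insert]
        rintro (h | h)
        exacts [hne h, h1 h]
      rw [Finset.mem_sigma, Finset.mem_powersetCard, Finset.mem_filter]
      refine ⟨⟨Finset.subset_univ _, ?_⟩, Finset.mem_univ _, hlt, Finset.mem_insert_self _ _,
        Finset.mem_insert_of_mem (Finset.mem_insert_self _ _)⟩
      rw [Finset.card_insert_of_notMem h1', Finset.card_insert_of_notMem h2, hcard]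
    · rintro ⟨b, p⟩ hy
      rw [Finset.mem_sigma, Finset.mem_powersetCard, Finset.mem_filter] at hy
      obtain ⟨⟨-, hcard⟩, -, hlt, h1, h2⟩ := hy
      have hne : p.1 ≠ p.2 := ne_of_lt hlt
      rw [Finset.mem_sigma, Finset.mem_filter, Finset.mem_powersetCard]
      refine ⟨⟨Finset.mem_univ _, hlt⟩, fun x hx => ?_, ?_⟩
      · rw [Finset.mem_erase, Finset.mem_erase] at hx
        simp only [Finset.mem_sdiff, Finset.mem_univ, true_and, Finset.mem_insert,
          Finset.mem_singleton]
        push_neg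
        exact ⟨hx.2.1, hx.1⟩
      · have h2' : p.2 ∈ b.erase p.1 := Finset.mem_erase.2 ⟨hne.symm, h2⟩
        rw [Finset.card_erase_of_mem h2', Finset.card_erase_of_mem h1, hcard]
        omega
    · rintro ⟨p, a⟩ hx
      rw [Finset.mem_sigma, Finset.mem_filter] at hx
      obtain ⟨⟨-, hlt⟩, ha⟩ := hx
      obtain ⟨hcard, h1, h2⟩ := mem_avoid l ha
      have hne : p.1 ≠ p.2 := ne_of_lt hlt
      have h1' : p.1 ∉ insert p.2 a := by
        simp only [Finset.mem_insert]
        rintro (h | h)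
        exacts [hne h, h1 h]
      simp only
      rw [Finset.erase_insert h1', Finset.erase_insert h2]
    · rintro ⟨b, p⟩ hy
      rw [Finset.mem_sigma, Finset.mem_powersetCard, Finset.mem_filter] at hy
      obtain ⟨⟨-, hcard⟩, -, hlt, h1, h2⟩ := hy
      have hne : p.1 ≠ p.2 := ne_of_lt hlt
      simp only
      have h2' : p.2 ∈ b.erase p.1 := Finset.mem_erase.2 ⟨hne.symm, h2⟩
      rw [Finset.insert_erase h2', Finset.insert_erase h1]
    · rintro ⟨p, a⟩ _
      rfl
  rw [key, Finset.sum_sigma]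
  rw [Finset.mul_sum]
  refine Finset.sum_congr rfl fun b hb => ?_
  simp only
  rw [Finset.sum_const, card_lt_pairs b, (Finset.mem_powersetCard.1 hb).2,
    nsmul_eq_mul]

lemma T4_eq :
    ∑ p ∈ univ.filter (fun p : Fin n × Fin n => p.1 < p.2),
      ∑ a ∈ powersetCard l (univ \ {p.1, p.2}), H a
    = ((n - l).choose 2 : ℝ) * ∑ a ∈ powersetCard l univ, H a := by
  classical
  rw [Finset.sum_comm' (s' := fun a => univ.filter
      (fun p : Fin n × Fin n => p.1 < p.2 ∧ p.1 ∉ a ∧ p.2 ∉ a))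
      (t' := powersetCard l univ) ?_]
  · rw [Finset.mul_sum]
    refine Finset.sum_congr rfl fun a ha => ?_
    rw [Finset.sum_const, nsmul_eq_mul]
    congr 2
    have hset : univ.filter (fun p : Fin n × Fin n => p.1 < p.2 ∧ p.1 ∉ a ∧ p.2 ∉ a)
        = univ.filter (fun p : Fin n × Fin n => p.1 < p.2 ∧ p.1 ∈ aᶜ ∧ p.2 ∈ aᶜ) := by
      ext p
      simp [Finset.mem_compl]
    rw [hset, card_lt_pairs (aᶜ), Finset.card_compl, Fintype.card_fin,
      (Finset.mem_powersetCard.1 ha).2]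
  · intro p a
    simp only [Finset.mem_filter, Finset.mem_univ, true_and, Finset.mem_powersetCard,
      Finset.subset_univ]
    constructor
    · rintro ⟨hlt, hsub, hcard⟩
      refine ⟨⟨hlt, fun h => ?_, fun h => ?_⟩, hcard⟩
      · have := hsub h; simp at this
      · have := hsub h; simp at this
    · rintro ⟨⟨hlt, h1, h2⟩, hcard⟩
      refine ⟨hlt, fun x hx => ?_, hcard⟩
      simp only [Finset.mem_sdiff, Finset.mem_univ, true_and, Finset.mem_insert,
        Finset.mem_singleton]
      push_neg
      exact ⟨fun h => h1 (h ▸ hx), fun h => h2 (h ▸ hx)⟩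

lemma T12_eq :
    ∑ p ∈ univ.filter (fun p : Fin n × Fin n => p.1 < p.2),
      ∑ a ∈ powersetCard l (univ \ {p.1, p.2}), (H (insert p.1 a) + H (insert p.2 a))
    = (((l + 1) * (n - (l + 1)) : ℕ) : ℝ) * ∑ c ∈ powersetCard (l + 1) univ, H c := by
  classical
  have hsplit : ∑ p ∈ univ.filter (fun p : Fin n × Fin n => p.1 ≠ p.2),
        ∑ a ∈ powersetCard l (univ \ {p.1, p.2}), H (insert p.1 a)
      = ∑ p ∈ univ.filter (fun p : Fin n × Fin n => p.1 < p.2),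
        ∑ a ∈ powersetCard l (univ \ {p.1, p.2}), (H (insert p.1 a) + H (insert p.2 a)) := by
    have hU : univ.filter (fun p : Fin n × Fin n => p.1 ≠ p.2)
        = univ.filter (fun p : Fin n × Fin n => p.1 < p.2)
          ∪ univ.filter (fun p : Fin n × Fin n => p.2 < p.1) := by
      ext p
      simp only [Finset.mem_union, Finset.mem_filter, Finset.mem_univ, true_and]
      constructor
      · exact fun h => lt_or_gt_of_ne h
      · rintro (h | h)
        exacts [ne_of_lt h, (ne_of_lt h).symm]
    have hdisj : Disjoint (univ.filter (fun p : Fin n × Fin n => p.1 < p.2))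
        (univ.filter (fun p : Fin n × Fin n => p.2 < p.1)) := by
      rw [Finset.disjoint_left]
      intro p h1 h2
      simp only [Finset.mem_filter, Finset.mem_univ, true_and] at h1 h2
      exact absurd h2 (lt_asymm h1)
    rw [hU, Finset.sum_union hdisj]
    have hswap : ∑ p ∈ univ.filter (fun p : Fin n × Fin n => p.2 < p.1),
          ∑ a ∈ powersetCard l (univ \ {p.1, p.2}), H (insert p.1 a)
        = ∑ p ∈ univ.filter (fun p : Fin n × Fin n => p.1 < p.2),
          ∑ a ∈ powersetCard l (univ \ {p.1, p.2}), H (insert p.2 a) := by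
      refine Finset.sum_nbij' Prod.swap Prod.swap ?_ ?_ ?_ ?_ ?_
      · intro p hp; simp only [Finset.mem_filter, Finset.mem_univ, true_and] at hp ⊢
        exact hp
      · intro p hp; simp only [Finset.mem_filter, Finset.mem_univ, true_and] at hp ⊢
        exact hp
      · intro p _; simp
      · intro p _; simp
      · intro p _
        simp only [Prod.fst_swap, Prod.snd_swap]
        congr 1
        rw [Finset.pair_comm]
    rw [hswap, ← Finset.sum_add_distrib]
    refine Finset.sum_congr rfl fun p _ => ?_
    rw [← Finset.sum_add_distrib]
  rw [← hsplit]
  rw [Finset.sum_sigma']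
  have key : ∑ x ∈ (univ.filter (fun p : Fin n × Fin n => p.1 ≠ p.2)).sigma
        (fun p => powersetCard l (univ \ {p.1, p.2})),
        H (insert x.1.1 x.2)
      = ∑ y ∈ (powersetCard (l + 1) (univ : Finset (Fin n))).sigma
          (fun c => univ.filter (fun p : Fin n × Fin n => p.1 ∈ c ∧ p.2 ∉ c)),
          H y.1 := by
    refine Finset.sum_nbij' (fun x => ⟨insert x.1.1 x.2, x.1⟩)
      (fun y => ⟨y.2, y.1.erase y.2.1⟩) ?_ ?_ ?_ ?_ ?_
    · rintro ⟨p, a⟩ hx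
      rw [Finset.mem_sigma, Finset.mem_filter] at hx
      obtain ⟨⟨-, hne⟩, ha⟩ := hx
      obtain ⟨hcard, h1, h2⟩ := mem_avoid l ha
      rw [Finset.mem_sigma, Finset.mem_powersetCard, Finset.mem_filter]
      refine ⟨⟨Finset.subset_univ _, ?_⟩, Finset.mem_univ _,
        Finset.mem_insert_self _ _, ?_⟩
      · rw [Finset.card_insert_of_notMem h1, hcard]
      · simp only [Finset.mem_insert]
        push_neg
        exact ⟨hne.symm, h2⟩
    · rintro ⟨c, p⟩ hy
      rw [Finset.mem_sigma, Finset.mem_powersetCard, Finset.mem_filter] at hy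
      obtain ⟨⟨-, hcard⟩, -, h1, h2⟩ := hy
      have hne : p.1 ≠ p.2 := fun h => h2 (h ▸ h1)
      rw [Finset.mem_sigma, Finset.mem_filter, Finset.mem_powersetCard]
      refine ⟨⟨Finset.mem_univ _, hne⟩, fun x hx => ?_, ?_⟩
      · rw [Finset.mem_erase] at hx
        simp only [Finset.mem_sdiff, Finset.mem_univ, true_and, Finset.mem_insert,
          Finset.mem_singleton]
        push_neg
        exact ⟨hx.1, fun h => h2 (h ▸ hx.2)⟩
      · rw [Finset.card_erase_of_mem h1, hcard]
        omega
    · rintro ⟨p, a⟩ hx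
      rw [Finset.mem_sigma, Finset.mem_filter] at hx
      obtain ⟨⟨-, hne⟩, ha⟩ := hx
      obtain ⟨hcard, h1, h2⟩ := mem_avoid l ha
      simp only
      rw [Finset.erase_insert h1]
    · rintro ⟨c, p⟩ hy
      rw [Finset.mem_sigma, Finset.mem_powersetCard, Finset.mem_filter] at hy
      obtain ⟨⟨-, hcard⟩, -, h1, h2⟩ := hy
      simp only
      rw [Finset.insert_erase h1]
    · rintro ⟨p, a⟩ _
      rfl
  rw [key, Finset.sum_sigma]
  rw [Finset.mul_sum]
  refine Finset.sum_congr rfl fun c hc => ?_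
  simp only
  rw [Finset.sum_const, filter_mem_not_mem c, (Finset.mem_powersetCard.1 hc).2,
    nsmul_eq_mul]

lemma comb_identity :
    ∑ p ∈ univ.filter (fun p : Fin n × Fin n => p.1 < p.2),
      ∑ a ∈ powersetCard l (univ \ {p.1, p.2}),
        (H (insert p.1 a) + H (insert p.2 a) - H (insert p.1 (insert p.2 a)) - H a)
    = (((l + 1) * (n - (l + 1)) : ℕ) : ℝ) * ∑ c ∈ powersetCard (l + 1) univ, H c
      - ((l + 2).choose 2 : ℝ) * ∑ b ∈ powersetCard (l + 2) univ, H b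
      - ((n - l).choose 2 : ℝ) * ∑ a ∈ powersetCard l univ, H a := by
  have expand : ∀ p ∈ univ.filter (fun p : Fin n × Fin n => p.1 < p.2),
      ∑ a ∈ powersetCard l (univ \ {p.1, p.2}),
        (H (insert p.1 a) + H (insert p.2 a) - H (insert p.1 (insert p.2 a)) - H a)
      = (∑ a ∈ powersetCard l (univ \ {p.1, p.2}), (H (insert p.1 a) + H (insert p.2 a)))
        - (∑ a ∈ powersetCard l (univ \ {p.1, p.2}), H (insert p.1 (insert p.2 a)))
        - ∑ a ∈ powersetCard l (univ \ {p.1, p.2}), H a := by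
    intro p _
    rw [← Finset.sum_sub_distrib, ← Finset.sum_sub_distrib]
  rw [Finset.sum_congr rfl expand, Finset.sum_sub_distrib, Finset.sum_sub_distrib,
    T12_eq, T3_eq, T4_eq]

end comb

end combLemmas

section cmiRestr
set_option maxHeartbeats 1000000 in
lemma cmi_restr {n : ℕ} {S : Type*} [Fintype S] (μ : Measure Ω)
    (X : Fin n → Ω → S) {i j : Fin n} {a : Finset (Fin n)}
    (hij : i ≠ j) (hi : i ∉ a) (hj : j ∉ a) :
    cmi μ (X i) (X j) (restr X a)
      = ent μ (restr X (insert i a)) + ent μ (restr X (insert j a))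
        - ent μ (restr X (insert i (insert j a))) - ent μ (restr X a) := by
  classical
  have h1 : ∀ (m : Fin n) (hm : m ∉ a),
      ent μ (fun ω => (X m ω, restr X a ω)) = ent μ (restr X (insert m a)) := by
    intro m hm
    have hf : Function.Injective (fun g : ((insert m a : Finset (Fin n)) : Type _) → S =>
        ((g (Subtype.mk m (Finset.mem_insert_self m a)),
          fun x : ((a : Finset (Fin n)) : Type _) =>
            g (Subtype.mk x.1 (Finset.mem_insert_of_mem x.2))) :
          S × (((a : Finset (Fin n)) : Type _) → S))) := by
      intro g g' h
      have h1 := congrArg Prod.fst h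
      have h2 := congrArg Prod.snd h
      simp only at h1 h2
      funext x
      rcases x with ⟨x, hx⟩
      rcases Finset.mem_insert.1 hx with rfl | hxa
      · exact h1
      · exact congrFun h2 (Subtype.mk x hxa)
    exact ent_comp_inj μ (restr X (insert m a)) _ hf
  have h3 : ent μ (fun ω => (X i ω, X j ω, restr X a ω))
      = ent μ (restr X (insert i (insert j a))) := by
    have hf : Function.Injective
        (fun g : ((insert i (insert j a) : Finset (Fin n)) : Type _) → S =>
          ((g (Subtype.mk i (Finset.mem_insert_self i _)),
            g (Subtype.mk j (Finset.mem_insert_of_mem (Finset.mem_insert_self j a))),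
            fun x : ((a : Finset (Fin n)) : Type _) =>
              g (Subtype.mk x.1 (Finset.mem_insert_of_mem (Finset.mem_insert_of_mem x.2)))) :
          S × S × (((a : Finset (Fin n)) : Type _) → S))) := by
      intro g g' h
      have h1 := congrArg Prod.fst h
      have h2 := congrArg (fun t => t.2.1) h
      have h3 := congrArg (fun t => t.2.2) h
      simp only at h1 h2 h3
      funext x
      rcases x with ⟨x, hx⟩
      rcases Finset.mem_insert.1 hx with rfl | hx2
      · exact h1
      · rcases Finset.mem_insert.1 hx2 with rfl | hxa
        · exact h2
        · exact congrFun h3 (Subtype.mk x hxa)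
    exact ent_comp_inj μ (restr X (insert i (insert j a))) _ hf
  unfold cmi
  rw [h1 i hi, h1 j hj, h3]

end cmiRestr

/-- The average subset entropies are concave in the subset size:
`r_{k+1}(X) + r_{k-1}(X) ≤ 2 r_k(X)` for all `1 ≤ k ≤ n-1`; equivalently `u_k(X) ≥ 0`. -/
theorem r_concave_u_nonneg {Ω S : Type*} [MeasurableSpace Ω]
    [Fintype S] [MeasurableSpace S] [MeasurableSingletonClass S]
    {n : ℕ} (hn : 2 ≤ n) (μ : Measure Ω) [IsProbabilityMeasure μ]
    (X : Fin n → Ω → S) (hX : ∀ i, Measurable (X i)) :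
    ∀ k, 1 ≤ k → k ≤ n - 1 →
      rE μ X (k + 1) + rE μ X (k - 1) ≤ 2 * rE μ X k ∧ 0 ≤ uI μ X k := by
  classical
  intro k hk1 hk2
  obtain ⟨l, rfl⟩ : ∃ l, k = l + 1 := ⟨k - 1, (Nat.succ_pred_eq_of_pos hk1).symm⟩
  have hln : l + 2 ≤ n := by omega
  set H : Finset (Fin n) → ℝ := fun s => ent μ (restr X s) with hH
  -- the index sets in `uI` are `powersetCard`s
  have hsets : ∀ p : Fin n × Fin n,
      (univ \ ({p.1, p.2} : Finset (Fin n))).powerset.filter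
          (fun a : Finset (Fin n) => a.card = l + 1 - 1)
        = powersetCard l (univ \ {p.1, p.2}) := by
    intro p
    ext a
    simp [Finset.mem_powersetCard, Finset.mem_powerset]
  -- the sum in `uI` equals the combinatorial expansion
  have hsum : ∑ p ∈ univ.filter (fun p : Fin n × Fin n => p.1 < p.2),
      ∑ a ∈ (univ \ ({p.1, p.2} : Finset (Fin n))).powerset.filter
          (fun a : Finset (Fin n) => a.card = l + 1 - 1),
        cmi μ (X p.1) (X p.2) (restr X a)
      = ∑ p ∈ univ.filter (fun p : Fin n × Fin n => p.1 < p.2),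
        ∑ a ∈ powersetCard l (univ \ {p.1, p.2}),
          (H (insert p.1 a) + H (insert p.2 a) - H (insert p.1 (insert p.2 a)) - H a) := by
    refine Finset.sum_congr rfl fun p hp => ?_
    rw [hsets p]
    refine Finset.sum_congr rfl fun a ha => ?_
    obtain ⟨hcard, h1, h2⟩ := mem_avoid l ha
    have hlt : p.1 < p.2 := (Finset.mem_filter.1 hp).2
    exact cmi_restr μ X (ne_of_lt hlt) h1 h2
  -- nonnegativity of uI
  have huI0 : 0 ≤ uI μ X (l + 1) := by
    unfold uI
    refine mul_nonneg (by positivity) (Finset.sum_nonneg fun p _ =>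
      Finset.sum_nonneg fun a _ => ?_)
    exact cmi_nonneg μ (X p.1) (X p.2) (restr X a) (hX p.1) (hX p.2)
      (measurable_pi_lambda _ fun x => hX x.1)
  -- rE in powersetCard form
  have hrE : ∀ m : ℕ, rE μ X m = ((n.choose m : ℝ))⁻¹ * ∑ s ∈ powersetCard m univ, H s := by
    intro m
    unfold rE
    congr 1
    refine Finset.sum_congr ?_ fun _ _ => rfl
    ext a
    simp [Finset.mem_powersetCard, Finset.mem_powerset]
  -- natural-number binomial identities
  have t1 : (l + 2).choose 2 * 2 = (l + 2) * (l + 1) := by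
    have h := Nat.choose_succ_right_eq (l + 2) 1
    rw [Nat.choose_one_right] at h
    simpa using h
  have t2 : (n - l).choose 2 * 2 = (n - l) * (n - l - 1) := by
    have h := Nat.choose_succ_right_eq (n - l) 1
    rw [Nat.choose_one_right] at h
    simpa using h
  have R1 : n.choose (l + 2) * (l + 2) = n.choose (l + 1) * (n - (l + 1)) :=
    Nat.choose_succ_right_eq n (l + 1)
  have R2 : n.choose (l + 1) * (l + 1) = n.choose l * (n - l) :=
    Nat.choose_succ_right_eq n l
  have N1 : n.choose (l + 1) * ((l + 1) * (n - (l + 1))) = 2 * (n.choose (l + 2) * (l + 2).choose 2) := by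
    calc n.choose (l + 1) * ((l + 1) * (n - (l + 1)))
        = (n.choose (l + 1) * (n - (l + 1))) * (l + 1) := by ring
      _ = (n.choose (l + 2) * (l + 2)) * (l + 1) := by rw [R1]
      _ = n.choose (l + 2) * ((l + 2) * (l + 1)) := by ring
      _ = n.choose (l + 2) * ((l + 2).choose 2 * 2) := by rw [t1]
      _ = 2 * (n.choose (l + 2) * (l + 2).choose 2) := by ring
  have N2 : n.choose l * ((n - l).choose 2 * 2) = 2 * (n.choose (l + 2) * (l + 2).choose 2) := by
    have hnl : n - l - 1 = n - (l + 1) := by omega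
    calc n.choose l * ((n - l).choose 2 * 2)
        = n.choose l * ((n - l) * (n - l - 1)) := by rw [t2]
      _ = (n.choose l * (n - l)) * (n - (l + 1)) := by rw [hnl]; ring
      _ = (n.choose (l + 1) * (l + 1)) * (n - (l + 1)) := by rw [R2]
      _ = (n.choose (l + 1) * ((l + 1) * (n - (l + 1)))) := by ring
      _ = 2 * (n.choose (l + 2) * (l + 2).choose 2) := N1
  -- nonvanishing of the binomial coefficients
  have hc0 : (0 : ℝ) < (n.choose l : ℝ) := by
    exact_mod_cast Nat.choose_pos (by omega : l ≤ n)
  have hc1 : (0 : ℝ) < (n.choose (l + 1) : ℝ) := by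
    exact_mod_cast Nat.choose_pos (by omega : l + 1 ≤ n)
  have hc2 : (0 : ℝ) < (n.choose (l + 2) : ℝ) := by
    exact_mod_cast Nat.choose_pos (by omega : l + 2 ≤ n)
  have hd : (0 : ℝ) < (((l + 2).choose 2 : ℕ) : ℝ) := by
    exact_mod_cast Nat.choose_pos (by omega : 2 ≤ l + 2)
  -- the key identity : uI = 2 rE k - rE (k+1) - rE (k-1)
  have hkey : uI μ X (l + 1) = 2 * rE μ X (l + 1) - rE μ X (l + 1 + 1) - rE μ X (l + 1 - 1) := by
    unfold uI
    rw [hsum, comb_identity H l]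
    have e1 : l + 1 + 1 = l + 2 := rfl
    have e0 : l + 1 - 1 = l := rfl
    rw [e1, e0, hrE (l + 1), hrE (l + 2), hrE l]
    have N1' : ((n.choose (l + 1) : ℝ)) * (((l + 1) * (n - (l + 1)) : ℕ) : ℝ)
        = 2 * ((n.choose (l + 2) : ℝ) * (((l + 2).choose 2 : ℕ) : ℝ)) := by
      exact_mod_cast N1
    have N2' : ((n.choose l : ℝ)) * ((((n - l).choose 2 : ℕ) : ℝ) * 2)
        = 2 * ((n.choose (l + 2) : ℝ) * (((l + 2).choose 2 : ℕ) : ℝ)) := by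
      exact_mod_cast N2
    push_cast at N1' N2'
    have hA : ((n.choose (l + 2) : ℝ) * (((l + 2).choose 2 : ℕ) : ℝ))⁻¹
          * (((l + 1) * (n - (l + 1)) : ℕ) : ℝ) = 2 * ((n.choose (l + 1) : ℝ))⁻¹ := by
      field_simp
      push_cast
      linear_combination N1'
    have hB : ((n.choose (l + 2) : ℝ) * (((l + 2).choose 2 : ℕ) : ℝ))⁻¹
          * (((l + 2).choose 2 : ℕ) : ℝ) = ((n.choose (l + 2) : ℝ))⁻¹ := by
      rw [mul_inv, mul_assoc, inv_mul_cancel₀ (ne_of_gt hd), mul_one]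
    have hC : ((n.choose (l + 2) : ℝ) * (((l + 2).choose 2 : ℕ) : ℝ))⁻¹
          * ((((n - l).choose 2 : ℕ) : ℝ)) = ((n.choose l : ℝ))⁻¹ := by
      field_simp
      push_cast
      linear_combination ((1:ℝ)/2) * N2'
    linear_combination
      (∑ c ∈ powersetCard (l + 1) univ, H c) * hA
      - (∑ b ∈ powersetCard (l + 2) univ, H b) * hB
      - (∑ a ∈ powersetCard l univ, H a) * hC
  refine ⟨by linarith [hkey, huI0], huI0⟩
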